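/- Let Λ ⊂ ℝ^k be a lattice of full rank k. Then there exists a ℤ-basis b1,...,bk of Λ such that the product ‖b1‖₂ ⋯ ‖bk‖₂ ≤ 2^k (3/2)^{k(k-1)/2} · covol(Λ) / ω_k, where ω_k is the volume of the Euclidean unit ball in ℝ^k. -/

import Mathlib

/-- The volume of the Euclidean unit ball in ℝ^k. -/
noncomputable def unitBallVol (k : ℕ) : ℝ :=
  Real.pi ^ ((k : ℝ) / 2) / Real.Gamma ((k : ℝ) / 2 + 1)

open Module Submodule Finset Matrix


noncomputable def gramMat {E : Type} [NormedAddCommGroup E] [InnerProductSpace ℝ E] {m : ℕ}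
    (w : Fin m → E) : Matrix (Fin m) (Fin m) ℝ :=
  Matrix.of fun i j => inner ℝ (w i) (w j)

lemma gramMat_transform {E : Type} [NormedAddCommGroup E] [InnerProductSpace ℝ E] {m : ℕ}
    (w : Fin m → E) (P : Matrix (Fin m) (Fin m) ℝ) :
    gramMat (fun i => ∑ j, P i j • w j) = P * gramMat w * Pᵀ := by
  ext i j
  simp only [gramMat, Matrix.mul_apply, Matrix.of_apply, Matrix.transpose_apply,
    inner_sum, sum_inner, real_inner_smul_left, real_inner_smul_right, Finset.mul_sum,
    Finset.sum_mul]
  refine Finset.sum_congr rfl fun k _ => Finset.sum_congr rfl fun l _ => ?_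
  rw [real_inner_comm]; ring

lemma det_gramMat_cons {E : Type} [NormedAddCommGroup E] [InnerProductSpace ℝ E] {m : ℕ}
    (v : E) (c : Fin m → E) (h : ∀ i, inner ℝ v (c i) = (0:ℝ)) :
    (gramMat (Fin.cons v c)).det = ‖v‖^2 * (gramMat c).det := by
  rw [Matrix.det_succ_row_zero]
  rw [Finset.sum_eq_single 0]
  · have h1 : (gramMat (Fin.cons v c)) 0 0 = ‖v‖^2 := by
      simp [gramMat, real_inner_self_eq_norm_sq]
    have h2 : (gramMat (Fin.cons v c)).submatrix Fin.succ (Fin.succAbove 0) = gramMat c := by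
      ext i j
      simp [gramMat, Fin.succAbove, Matrix.submatrix]
    rw [h1, h2]
    simp
  · intro b _ hb
    have : (gramMat (Fin.cons v c)) 0 b = 0 := by
      obtain ⟨b, rfl⟩ := Fin.exists_succ_eq.mpr hb
      simpa [gramMat] using h b
    simp [this]
  · simp


lemma span_int_coe_basis {E : Type} [NormedAddCommGroup E] [InnerProductSpace ℝ E] {n : ℕ}
    (Λ : Submodule ℤ E) (b : Basis (Fin n) ℤ Λ) :
    span ℤ (Set.range (fun i => (b i : E))) = Λ := by
  apply le_antisymm
  · rw [span_le]
    rintro - ⟨i, rfl⟩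
    exact (b i).2
  · intro x hx
    have : (⟨x, hx⟩ : Λ) = ∑ i, b.repr ⟨x, hx⟩ i • b i := (b.sum_repr ⟨x, hx⟩).symm
    have hx' : x = ∑ i, b.repr ⟨x, hx⟩ i • (b i : E) := by
      have := congrArg (Λ.subtype) this
      simp only [map_sum, map_smul, map_zsmul, Submodule.subtype_apply] at this
      exact this
    rw [hx']
    exact Submodule.sum_mem _ fun i _ => Submodule.smul_mem _ _ (Submodule.subset_span ⟨i, rfl⟩)

lemma exists_shortest {E : Type} [NormedAddCommGroup E] [InnerProductSpace ℝ E]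
    [FiniteDimensional ℝ E] {n : ℕ} (hn : 0 < n)
    (Λ : Submodule ℤ E) (b : Basis (Fin n) ℤ Λ)
    (hind : LinearIndependent ℝ (fun i => (b i : E)))
    (hfin : finrank ℝ E = n) :
    ∃ v, v ∈ Λ ∧ v ≠ 0 ∧ ∀ w ∈ Λ, w ≠ 0 → ‖v‖ ≤ ‖w‖ := by
  -- E basis from the lattice vectors
  have hcard : Fintype.card (Fin n) = finrank ℝ E := by simp [hfin]
  have : Nonempty (Fin n) := ⟨⟨0, hn⟩⟩
  let bE : Basis (Fin n) ℝ E := basisOfLinearIndependentOfCardEqFinrank hind hcard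
  have hbE : ⇑bE = fun i => (b i : E) := by
    simp [bE, coe_basisOfLinearIndependentOfCardEqFinrank]
  have hspan : span ℤ (Set.range ⇑bE) = Λ := by
    rw [hbE]; exact span_int_coe_basis Λ b
  have hdisc : DiscreteTopology (span ℤ (Set.range ⇑bE)) := inferInstance
  rw [hspan] at hdisc
  have hdisc' : DiscreteTopology (Λ : Set E) := hdisc
  have hclosed : IsClosed (Λ : Set E) := by
    have hd2 : DiscreteTopology Λ.toAddSubgroup := hdisc
    exact AddSubgroup.isClosed_of_discrete (H := Λ.toAddSubgroup)
  -- a nonzero element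
  have hb0 : (b ⟨0, hn⟩ : E) ≠ 0 := by
    intro h
    exact hind.ne_zero ⟨0, hn⟩ h
  set x0 : E := (b ⟨0, hn⟩ : E) with hx0
  have hx0Λ : x0 ∈ Λ := (b ⟨0, hn⟩).2
  -- finite set of candidates
  have hfinite : Set.Finite (Metric.closedBall (0:E) ‖x0‖ ∩ (Λ : Set E)) :=
    Metric.finite_isBounded_inter_isClosed (s := (Λ : Set E)) ⟨hdisc'⟩ Metric.isBounded_closedBall hclosed
  set S : Set E := (Metric.closedBall (0:E) ‖x0‖ ∩ (Λ : Set E)) \ {0} with hS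
  have hSfin : S.Finite := hfinite.diff
  have hSne : S.Nonempty :=
    ⟨x0, ⟨⟨by simp [Metric.mem_closedBall], hx0Λ⟩, hb0⟩⟩
  obtain ⟨v, hvS, hvmin⟩ := S.exists_min_image norm hSfin hSne
  refine ⟨v, hvS.1.2, hvS.2, fun w hwΛ hw0 => ?_⟩
  by_cases hw : ‖w‖ ≤ ‖x0‖
  · exact hvmin w ⟨⟨by simpa [Metric.mem_closedBall] using hw, hwΛ⟩, hw0⟩
  · have h1 : ‖v‖ ≤ ‖x0‖ := by
      have := hvS.1.1
      simpa [Metric.mem_closedBall] using this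
    linarith


lemma span_int_coe_basis' {E : Type} [NormedAddCommGroup E] [InnerProductSpace ℝ E] {n : ℕ}
    (Λ : Submodule ℤ E) (b : Basis (Fin n) ℤ Λ) :
    span ℤ (Set.range (fun i => (b i : E))) = Λ := by
  apply le_antisymm
  · rw [span_le]; rintro - ⟨i, rfl⟩; exact (b i).2
  · intro x hx
    have h1 : (⟨x, hx⟩ : Λ) = ∑ i, b.repr ⟨x, hx⟩ i • b i := (b.sum_repr ⟨x, hx⟩).symm
    have hx' : x = ∑ i, b.repr ⟨x, hx⟩ i • (b i : E) := by
      have := congrArg (Λ.subtype) h1; simp only [map_sum, map_smul, map_zsmul, Submodule.subtype_apply] at this; exact this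
    rw [hx']
    exact Submodule.sum_mem _ fun i _ =>
      Submodule.smul_mem _ _ (Submodule.subset_span (Set.mem_range_self i))

lemma indep_of_spanR_top {K : Type} [NormedAddCommGroup K] [InnerProductSpace ℝ K]
    [FiniteDimensional ℝ K] {n : ℕ} (Λ' : Submodule ℤ K)
    (hsp : span ℝ (Λ' : Set K) = ⊤) (hfinK : finrank ℝ K = n)
    (b' : Basis (Fin n) ℤ Λ') :
    LinearIndependent ℝ (fun i => (b' i : K)) := by
  have hsp2 : span ℝ (Set.range (fun i => (b' i : K))) = ⊤ := by
    have h1 : span ℤ (Set.range (fun i => (b' i : K))) = Λ' := span_int_coe_basis' Λ' b'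
    have h2 := Submodule.span_span_of_tower ℤ (M := K) ℝ (Set.range (fun i => (b' i : K)))
    rw [h1] at h2
    rw [← h2, hsp]
  rw [linearIndependent_iff_card_eq_finrank_span]
  rw [Set.finrank, hsp2, finrank_top, hfinK, Fintype.card_fin]

section decomp
variable {E : Type} [NormedAddCommGroup E] [InnerProductSpace ℝ E]

lemma proj_formula {v : E} (hv : v ≠ 0) (x : E) :
    ((orthogonalProjection ((ℝ ∙ v)ᗮ) x : E)) = x - (inner ℝ x v / ‖v‖^2) • v := by
  have hvn : ‖v‖ ≠ 0 := norm_ne_zero_iff.mpr hv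
  set s : ℝ := inner ℝ x v / ‖v‖^2 with hs
  have hmem : x - s • v ∈ (ℝ ∙ v)ᗮ := by
    rw [Submodule.mem_orthogonal_singleton_iff_inner_right]
    rw [inner_sub_right, real_inner_smul_right, real_inner_self_eq_norm_sq, hs,
      real_inner_comm]
    field_simp
    ring
  have hv' : v ∈ (ℝ ∙ v)ᗮᗮ := by
    rw [Submodule.orthogonal_orthogonal]
    exact Submodule.mem_span_singleton_self v
  have h1' : x = (x - s • v) + s • v := by abel
  calc ((orthogonalProjection ((ℝ ∙ v)ᗮ) x : E))
      = ((orthogonalProjection ((ℝ ∙ v)ᗮ) ((x - s • v) + s • v) : E)) := by rw [← h1']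
    _ = ((orthogonalProjection ((ℝ ∙ v)ᗮ) (x - s • v)
          + s • orthogonalProjection ((ℝ ∙ v)ᗮ) v : ((ℝ ∙ v)ᗮ : Submodule ℝ E)) : E) := by
        rw [map_add, _root_.map_smul]
    _ = x - s • v := by
        rw [orthogonalProjection_mem_subspace_eq_self ⟨x - s • v, hmem⟩,
          orthogonalProjection_mem_subspace_orthogonalComplement_eq_zero hv']
        simp

lemma norm_sq_decomp {v : E} (hv : v ≠ 0) (x : E) :
    ‖x‖^2 = ‖(orthogonalProjection ((ℝ ∙ v)ᗮ) x : E)‖^2 + (inner ℝ x v / ‖v‖^2)^2 * ‖v‖^2 := by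
  have hvn : ‖v‖ ≠ 0 := norm_ne_zero_iff.mpr hv
  set s : ℝ := inner ℝ x v / ‖v‖^2 with hs
  have h1 : x = (x - s • v) + s • v := by abel
  have horth : inner ℝ (x - s • v) (s • v) = (0:ℝ) := by
    rw [inner_sub_left, real_inner_smul_right, real_inner_smul_right, real_inner_smul_left,
      real_inner_self_eq_norm_sq, hs]
    rw [real_inner_comm v x]
    field_simp
    ring
  calc ‖x‖^2 = ‖(x - s • v) + s • v‖^2 := by rw [← h1]
    _ = ‖x - s • v‖^2 + ‖s • v‖^2 := by rw [norm_add_sq_real, horth]; ring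
    _ = ‖(orthogonalProjection ((ℝ ∙ v)ᗮ) x : E)‖^2 + s^2 * ‖v‖^2 := by
        rw [proj_formula hv, norm_smul]
        rw [mul_pow]
        simp [sq_abs, hs]
        left; rw [div_pow, div_pow, sq_abs]

end decomp
lemma tri_succ (n : ℕ) : (n+1)*((n+1)-1)/2 = n*(n-1)/2 + n := by
  cases n with
  | zero => simp
  | succ m =>
    have h1 : (m+1+1)*((m+1+1)-1) = (m+1)*((m+1)-1) + (m+1)*2 := by
      simp only [Nat.add_sub_cancel]
      ring
    rw [h1, Nat.add_mul_div_right _ _ (by norm_num : (0:ℕ) < 2)]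

lemma int_nzsd {E : Type} [AddCommGroup E] [Module ℝ E] : NoZeroSMulDivisors ℤ E := by
  constructor
  intro m x h
  rw [← Int.cast_smul_eq_zsmul ℝ] at h
  rcases smul_eq_zero.mp h with h | h
  · exact Or.inl (by exact_mod_cast h)
  · exact Or.inr h

set_option maxHeartbeats 2000000 in
set_option synthInstance.maxHeartbeats 400000 in
theorem hermite_aux : ∀ (n : ℕ) (E : Type) [NormedAddCommGroup E] [InnerProductSpace ℝ E]
    (_ : finrank ℝ E = n) (Λ : Submodule ℤ E) (b : Basis (Fin n) ℤ Λ)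
    (_ : LinearIndependent ℝ (fun i => (b i : E))),
    ∃ c : Basis (Fin n) ℤ Λ,
      (∏ i, ‖(c i : E)‖)^2 ≤ (4/3 : ℝ)^(n*(n-1)/2) * (gramMat (fun i => (c i : E))).det := by
  intro n
  induction n with
  | zero =>
    intro E _ _ hfin Λ b hind
    exact ⟨b, by simp [gramMat, Matrix.det_fin_zero]⟩
  | succ n IH =>
    intro E instN instIP hfin Λ b hind
    haveI hfd : FiniteDimensional ℝ E := FiniteDimensional.of_finrank_pos (by rw [hfin]; omega)
    obtain ⟨v, hvΛ, hv0, hvmin⟩ := exists_shortest n.succ_pos Λ b hind hfin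
    have hvn : ‖v‖ ≠ 0 := norm_ne_zero_iff.mpr hv0
    have hvpos : (0:ℝ) < ‖v‖ := norm_pos_iff.mpr hv0
    -- step 1 : lattice points on the line ℝv are integer multiples of v
    have hZv : ∀ x, x ∈ Λ → x ∈ (ℝ ∙ v) → ∃ m : ℤ, x = (m : ℤ) • v := by
      intro x hxΛ hxv
      obtain ⟨t, rfl⟩ := Submodule.mem_span_singleton.mp hxv
      refine ⟨⌊t⌋, ?_⟩
      have hmemf : (⌊t⌋ : ℤ) • v ∈ Λ := Submodule.smul_mem Λ ⌊t⌋ hvΛ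
      have hy : t • v - (⌊t⌋ : ℤ) • v ∈ Λ := Submodule.sub_mem Λ hxΛ hmemf
      have hcast : ((⌊t⌋ : ℤ) • v : E) = (⌊t⌋ : ℝ) • v := (Int.cast_smul_eq_zsmul ℝ _ _).symm
      have hnorm : ‖t • v - (⌊t⌋ : ℤ) • v‖ = |t - ⌊t⌋| * ‖v‖ := by
        rw [hcast, ← sub_smul, norm_smul, Real.norm_eq_abs]
      by_cases h0 : t • v - (⌊t⌋ : ℤ) • v = 0
      · exact sub_eq_zero.mp h0
      · exfalso
        have h1 := hvmin _ hy h0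
        have h2 : |t - ⌊t⌋| < 1 := by
          rw [abs_of_nonneg (by linarith [Int.floor_le t])]
          linarith [Int.lt_floor_add_one t]
        rw [hnorm] at h1
        nlinarith
    -- step 2 : the orthogonal projection
    have hKK : ((ℝ ∙ v)ᗮᗮ : Submodule ℝ E) = ℝ ∙ v := Submodule.orthogonal_orthogonal _
    let pK := orthogonalProjection ((ℝ ∙ v)ᗮ)
    let f : Λ →ₗ[ℤ] ((ℝ ∙ v)ᗮ : Submodule ℝ E) :=
      ((pK.toLinearMap).restrictScalars ℤ) ∘ₗ Λ.subtype
    have hfval : ∀ x : Λ, f x = pK (x : E) := fun x => rfl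
    have hπv : pK v = 0 :=
      orthogonalProjection_mem_subspace_orthogonalComplement_eq_zero
        (by rw [hKK]; exact Submodule.mem_span_singleton_self v)
    have hker0 : ∀ x : Λ, f x = 0 ↔ (x : E) ∈ (ℝ ∙ v) := by
      intro x
      rw [hfval]
      constructor
      · intro h
        have hpf := proj_formula hv0 (x : E)
        rw [h] at hpf
        have h2 : (x : E) - (inner ℝ (x : E) v / ‖v‖^2) • v = 0 := by
          rw [← hpf]; simp
        exact Submodule.mem_span_singleton.mpr ⟨_, (sub_eq_zero.mp h2).symm⟩
      · intro h
        exact orthogonalProjection_mem_subspace_orthogonalComplement_eq_zero (by rw [hKK]; exact h)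
    set Λ' : Submodule ℤ ((ℝ ∙ v)ᗮ : Submodule ℝ E) := LinearMap.range f with hΛ'
    -- instances
    haveI : Module.Finite ℤ Λ := Module.Finite.of_basis b
    haveI : Module.Finite ℤ Λ' := Module.Finite.range f
    haveI hnz1 : NoZeroSMulDivisors ℤ ((ℝ ∙ v)ᗮ : Submodule ℝ E) := int_nzsd
    haveI : NoZeroSMulDivisors ℤ Λ' := ⟨fun {c x} h => by
        have h' : c • (x : ((ℝ ∙ v)ᗮ : Submodule ℝ E)) = 0 := by simpa using congrArg Subtype.val h
        rcases smul_eq_zero.mp h' with h'' | h''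
        · exact Or.inl h''
        · exact Or.inr (Submodule.coe_eq_zero.mp h'')⟩
    haveI : Module.Free ℤ Λ' := Module.free_of_finite_type_torsion_free'
    -- step 3 : kernel of f is generated by v
    set vL : Λ := ⟨v, hvΛ⟩ with hvL
    have hvL0 : vL ≠ 0 := fun h => hv0 (by simpa [hvL] using congrArg (Subtype.val) h)
    have hfvL : f vL = 0 := by
      rw [hfval]; exact hπv
    have hkergen : ∀ x : Λ, f x = 0 → ∃ m : ℤ, x = m • vL := by
      intro x hx
      obtain ⟨m, hm⟩ := hZv (x : E) x.2 ((hker0 x).mp hx)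
      exact ⟨m, Subtype.ext (by simpa [hvL] using hm)⟩
    -- step 4 : rank of Λ' is n
    have hrank : finrank ℤ Λ = finrank ℤ Λ' + 1 := by
      classical
      have hsurj : LinearMap.range f.rangeRestrict = ⊤ :=
        LinearMap.range_eq_top.mpr f.surjective_rangeRestrict
      obtain ⟨g, hg⟩ := f.rangeRestrict.exists_rightInverse_of_surjective hsurj
      have hg' : ∀ y, f.rangeRestrict (g y) = y := fun y => LinearMap.congr_fun hg y
      have ginj : Function.Injective g := Function.LeftInverse.injective hg'
      let pr : Λ →ₗ[ℤ] ↥(LinearMap.range g) :=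
        LinearMap.codRestrict (LinearMap.range g) (g ∘ₗ f.rangeRestrict)
          (fun x => LinearMap.mem_range_self g (f.rangeRestrict x))
      have hpr : ∀ x : ↥(LinearMap.range g), pr ↑x = x := by
        rintro ⟨-, y, rfl⟩
        ext
        simp [pr, hg']
      have hcompl : IsCompl (LinearMap.range g) (LinearMap.ker pr) := LinearMap.isCompl_of_proj hpr
      have hkerpr : LinearMap.ker pr = LinearMap.ker f := by
        ext x
        simp only [LinearMap.mem_ker, pr, LinearMap.codRestrict_apply,
          ← LinearMap.ker_rangeRestrict f]
        constructor
        · intro h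
          have h0 : g (f.rangeRestrict x) = 0 := by
            have := congrArg (Subtype.val) h
            simpa using this
          have : f.rangeRestrict x = 0 := by
            apply ginj; rw [h0, map_zero]
          simpa [LinearMap.mem_ker] using this
        · intro h
          have : f.rangeRestrict x = 0 := by simpa [LinearMap.mem_ker] using h
          ext
          simp [this]
      let e := (Submodule.prodEquivOfIsCompl _ _ hcompl).symm
      let eg := LinearEquiv.ofInjective g ginj
      -- ker f ≃ ℤ
      have hvker : vL ∈ LinearMap.ker f := by simpa [LinearMap.mem_ker] using hfvL
      let uk : ℤ →ₗ[ℤ] ↥(LinearMap.ker f) :=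
        LinearMap.toSpanSingleton ℤ _ (⟨vL, hvker⟩ : ↥(LinearMap.ker f))
      have hukbij : Function.Bijective uk := by
        constructor
        · intro m m' hmm
          have h1 : m • vL = m' • vL := by
            have := congrArg (Subtype.val) hmm
            simpa [uk, LinearMap.toSpanSingleton_apply] using this
          have h2 : (m - m') • vL = 0 := by
            rw [sub_smul, h1, sub_self]
          haveI : NoZeroSMulDivisors ℤ E := int_nzsd
          haveI : NoZeroSMulDivisors ℤ Λ := ⟨fun {c x} h => by
              have h' : c • (x : E) = 0 := by simpa using congrArg Subtype.val h
              rcases smul_eq_zero.mp h' with h'' | h''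
              · exact Or.inl h''
              · exact Or.inr (Submodule.coe_eq_zero.mp h'')⟩
          rcases smul_eq_zero.mp h2 with h | h
          · omega
          · exact absurd h hvL0
        · rintro ⟨x, hx⟩
          obtain ⟨m, hm⟩ := hkergen x (by simpa [LinearMap.mem_ker] using hx)
          exact ⟨m, Subtype.ext (by simpa [uk, LinearMap.toSpanSingleton_apply] using hm.symm)⟩
      let u := LinearEquiv.ofBijective uk hukbij
      let u' := u.trans (LinearEquiv.ofEq _ _ hkerpr.symm)
      haveI : Module.Free ℤ ↥(LinearMap.range g) := Module.Free.of_equiv eg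
      haveI : Module.Finite ℤ ↥(LinearMap.range g) := Module.Finite.equiv eg
      haveI : Module.Free ℤ ↥(LinearMap.ker pr) := Module.Free.of_equiv u'
      haveI : Module.Finite ℤ ↥(LinearMap.ker pr) := Module.Finite.equiv u'
      calc finrank ℤ Λ = finrank ℤ (↥(LinearMap.range g) × ↥(LinearMap.ker pr)) := e.finrank_eq
        _ = finrank ℤ ↥(LinearMap.range g) + finrank ℤ ↥(LinearMap.ker pr) := Module.finrank_prod
        _ = finrank ℤ Λ' + 1 := by
            rw [← eg.finrank_eq, ← u'.finrank_eq, finrank_self]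
    have hrankΛ : finrank ℤ Λ = n + 1 := by
      rw [Module.finrank_eq_card_basis b, Fintype.card_fin]
    have hrank' : finrank ℤ Λ' = n := by omega
    -- step 5 : a basis of Λ'
    let b' : Basis (Fin n) ℤ Λ' := (Module.Free.chooseBasis ℤ Λ').reindex
      (Fintype.equivFinOfCardEq (by rw [← Module.finrank_eq_card_chooseBasisIndex, hrank']))
    -- step 6 : span facts
    have hspE : span ℝ (Λ : Set E) = ⊤ := by
      have h1 : span ℝ (Set.range fun i => (b i : E)) = ⊤ :=
        hind.span_eq_top_of_card_eq_finrank' (by simp [hfin])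
      rw [eq_top_iff, ← h1]
      apply Submodule.span_mono
      rintro - ⟨i, rfl⟩
      exact (b i).2
    have hfinK : finrank ℝ ((ℝ ∙ v)ᗮ : Submodule ℝ E) = n := by
      have h1 := Submodule.finrank_add_finrank_orthogonal (𝕜 := ℝ) (ℝ ∙ v)
      rw [finrank_span_singleton hv0, hfin] at h1
      omega
    have hspK : span ℝ (Λ' : Set ((ℝ ∙ v)ᗮ : Submodule ℝ E)) = ⊤ := by
      have hsurjp : Function.Surjective (pK.toLinearMap) := fun y =>
        ⟨(y : E), orthogonalProjection_mem_subspace_eq_self y⟩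
      have hmapt : Submodule.map (pK.toLinearMap) ⊤ = ⊤ := by
        rw [Submodule.map_top, LinearMap.range_eq_top]
        exact hsurjp
      rw [eq_top_iff, ← hmapt, ← hspE, Submodule.map_span]
      apply Submodule.span_mono
      rintro - ⟨x, hx, rfl⟩
      exact ⟨⟨x, hx⟩, rfl⟩
    have hind' : LinearIndependent ℝ (fun i => (b' i : ((ℝ ∙ v)ᗮ : Submodule ℝ E))) :=
      indep_of_spanR_top Λ' hspK hfinK b'
    -- step 7 : apply the induction hypothesis
    obtain ⟨c', hc'⟩ := IH ((ℝ ∙ v)ᗮ : Submodule ℝ E) hfinK Λ' b' hind'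
    have hindc' : LinearIndependent ℝ (fun i => (c' i : ((ℝ ∙ v)ᗮ : Submodule ℝ E))) :=
      indep_of_spanR_top Λ' hspK hfinK c'
    -- step 8 : lift the basis with size reduction
    have hlift : ∀ i, ∃ a : Λ, f a = (c' i : ((ℝ ∙ v)ᗮ : Submodule ℝ E)) := fun i => (c' i).2
    choose a ha using hlift
    set t : Fin n → ℝ := fun i => inner ℝ ((a i : E)) v / ‖v‖^2 with ht
    set d : Fin n → Λ := fun i => a i - (round (t i)) • vL with hd
    set s : Fin n → ℝ := fun i => inner ℝ ((d i : E)) v / ‖v‖^2 with hs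
    have hdco : ∀ i, ((d i : Λ) : E) = (a i : E) - (round (t i) : ℝ) • v := by
      intro i
      simp [hd, hvL, ← Int.cast_smul_eq_zsmul ℝ]
    have hsval : ∀ i, s i = t i - round (t i) := by
      intro i
      rw [hs]
      simp only [hdco i, inner_sub_left, real_inner_smul_left, real_inner_self_eq_norm_sq]
      field_simp [ht]
      have htv : ‖v‖^2 * t i = inner ℝ (a i : E) v := by rw [ht]; field_simp
      rw [← htv]
      ring
    have hsabs : ∀ i, |s i| ≤ 1/2 := by
      intro i; rw [hsval i]; exact abs_sub_round (t i)
    have hfd2 : ∀ i, f (d i) = (c' i : ((ℝ ∙ v)ᗮ : Submodule ℝ E)) := by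
      intro i
      rw [hd]
      simp only [map_sub, map_zsmul, ha, hfvL, smul_zero, sub_zero]
    have hproj : ∀ i, ((pK ((d i : Λ) : E) : ((ℝ ∙ v)ᗮ : Submodule ℝ E)) : E)
        = ((c' i : ((ℝ ∙ v)ᗮ : Submodule ℝ E)) : E) := by
      intro i
      rw [← hfval, hfd2]
    have hnormd : ∀ i, ‖((d i : Λ) : E)‖^2
        = ‖((c' i : ((ℝ ∙ v)ᗮ : Submodule ℝ E)) : E)‖^2 + (s i)^2 * ‖v‖^2 := by
      intro i
      have := norm_sq_decomp hv0 ((d i : Λ) : E)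
      rw [hproj i] at this
      exact this
    have hd0 : ∀ i, ((d i : Λ) : E) ≠ 0 := by
      intro i h
      have h1 : d i = 0 := Submodule.coe_eq_zero.mp h
      have h2 := hfd2 i
      rw [h1, map_zero] at h2
      exact c'.ne_zero i (Submodule.coe_eq_zero.mp h2.symm)
    have hdlow : ∀ i, ‖v‖ ≤ ‖((d i : Λ) : E)‖ := fun i => hvmin _ (d i).2 (hd0 i)
    have hbound : ∀ i, ‖((d i : Λ) : E)‖^2
        ≤ (4/3) * ‖((c' i : ((ℝ ∙ v)ᗮ : Submodule ℝ E)) : E)‖^2 := by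
      intro i
      have h1 := hnormd i
      have h2 := hdlow i
      have h3 : (s i)^2 ≤ 1/4 := by
        have h4 := abs_le.mp (hsabs i)
        nlinarith [h4.1, h4.2]
      nlinarith [norm_nonneg ((d i : Λ) : E), norm_nonneg v]
    -- step 9 : the new basis
    set w : Fin (n+1) → Λ := Fin.cons vL d with hw
    have hwproj : ∀ i, pK ((w i : Λ) : E)
        = Fin.cons (α := fun _ => ↥((ℝ ∙ v)ᗮ : Submodule ℝ E)) 0
          (fun j => (c' j : ((ℝ ∙ v)ᗮ : Submodule ℝ E))) i := by
      intro i
      induction i using Fin.cases with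
      | zero => simpa [hw, hvL] using hπv
      | succ j => simpa [hw] using (by rw [← hfval, hfd2 j])
    have hwindR : LinearIndependent ℝ (fun i => ((w i : Λ) : E)) := by
      rw [Fintype.linearIndependent_iff]
      intro g hg
      have hg2 : ∑ i, g i • pK ((w i : Λ) : E) = 0 := by
        have h5 := congrArg pK hg
        rw [map_sum] at h5
        simp only [_root_.map_smul] at h5
        simpa using h5
      rw [Fin.sum_univ_succ] at hg2
      simp only [hwproj, Fin.cons_zero, Fin.cons_succ, smul_zero, zero_add] at hg2
      have hzero : ∀ j : Fin n, g j.succ = 0 :=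
        fun j => (Fintype.linearIndependent_iff.mp hindc') (fun j : Fin n => g j.succ) hg2 j
      have hg0 : g 0 • v = 0 := by
        rw [Fin.sum_univ_succ] at hg
        simp only [hzero, zero_smul, Finset.sum_const_zero, add_zero] at hg
        simpa [hw, hvL, Fin.cons_zero] using hg
      have h00 : g 0 = 0 := by
        rcases smul_eq_zero.mp hg0 with h | h
        · exact h
        · exact absurd h hv0
      intro i
      induction i using Fin.cases with
      | zero => exact h00
      | succ j => exact hzero j
    have hwspan : ⊤ ≤ span ℤ (Set.range w) := by
      intro x _
      set fx : Λ' := ⟨f x, LinearMap.mem_range_self f x⟩ with hfx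
      set m : Fin n → ℤ := fun j => c'.repr fx j with hm
      set y : Λ := x - ∑ j, m j • d j with hy
      have hfy : f y = 0 := by
        rw [hy, map_sub, map_sum]
        have h1 : ∑ j, f (m j • d j) = ((∑ j, m j • c' j : Λ') : ((ℝ ∙ v)ᗮ : Submodule ℝ E)) := by
          rw [Submodule.coe_sum]
          refine Finset.sum_congr rfl fun j _ => ?_
          rw [map_zsmul, hfd2 j, Submodule.coe_smul]
        rw [h1, c'.sum_repr fx]
        simp [hfx]
      obtain ⟨m0, hm0⟩ := hkergen y hfy
      have hxval : x = m0 • w 0 + ∑ j, m j • w j.succ := by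
        have : x = y + ∑ j, m j • d j := by rw [hy]; abel
        rw [this, hm0]
        simp [hw]
      rw [hxval]
      refine Submodule.add_mem _ (Submodule.smul_mem _ _ (Submodule.subset_span ⟨0, rfl⟩)) ?_
      exact Submodule.sum_mem _ fun j _ =>
        Submodule.smul_mem _ _ (Submodule.subset_span ⟨j.succ, rfl⟩)
    have hwindZ : LinearIndependent ℤ w := by
      have h1 : LinearIndependent ℤ (fun i => ((w i : Λ) : E)) := by
        apply hwindR.restrict_scalars
        intro r r' hrr
        have : (r : ℝ) = (r' : ℝ) := by simpa [zsmul_eq_mul] using hrr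
        exact_mod_cast this
      exact LinearIndependent.of_comp Λ.subtype h1
    let c : Basis (Fin (n+1)) ℤ Λ := Basis.mk hwindZ hwspan
    have hcw : ∀ i, (c i : E) = ((w i : Λ) : E) := by
      intro i; rw [Basis.mk_apply]
    refine ⟨c, ?_⟩
    -- step 10 : Gram determinant of the new basis
    set u : Fin (n+1) → E :=
      Fin.cons v (fun j => ((c' j : ((ℝ ∙ v)ᗮ : Submodule ℝ E)) : E)) with hu
    set P : Matrix (Fin (n+1)) (Fin (n+1)) ℝ :=
      Matrix.of (fun i j => if i = j then 1 else if j = 0 then (Fin.cases 0 s i) else 0) with hP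
    have hPw : (fun i => ∑ j, P i j • u j) = fun i => ((w i : Λ) : E) := by
      funext i
      induction i using Fin.cases with
      | zero =>
        rw [Finset.sum_eq_single 0]
        · simp [hP, hu, hw, hvL]
        · intro j _ hj
          have hPz : P 0 j = 0 := by
            simp only [hP, Matrix.of_apply]
            rw [if_neg (fun h => hj h.symm), if_neg hj]
          rw [hPz, zero_smul]
        · simp
      | succ i =>
        rw [Fin.sum_univ_succ, Finset.sum_eq_single i]
        · have h1 : P i.succ 0 = s i := by
            simp [hP, Fin.succ_ne_zero]
          have h2 : P i.succ i.succ = 1 := by simp [hP]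
          have h0 : u 0 = v := by simp [hu]
          have h3 : ((w i.succ : Λ) : E) = u i.succ + s i • v := by
            have h4 := proj_formula hv0 ((d i : Λ) : E)
            rw [hproj i] at h4
            have hwd : ((w i.succ : Λ) : E) = ((d i : Λ) : E) := by simp [hw]
            have hui : u i.succ = ((c' i : ((ℝ ∙ v)ᗮ : Submodule ℝ E)) : E) := by
              rw [hu]; simp
            rw [hwd, hui, h4]
            simp only [hs]
            abel
          rw [h1, h2, h0, h3, one_smul]
          abel
        · intro j _ hj
          have hPz : P i.succ j.succ = 0 := by
            simp only [hP, Matrix.of_apply]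
            rw [if_neg (fun h => hj (Fin.succ_inj.mp h).symm), if_neg (Fin.succ_ne_zero j)]
          rw [hPz, zero_smul]
        · simp
    have hgram1 : gramMat (fun i => ((w i : Λ) : E)) = P * gramMat u * Pᵀ := by
      rw [← hPw]; exact gramMat_transform u P
    have hdetP : P.det = 1 := by
      have htri : P.BlockTriangular OrderDual.toDual := by
        intro i j hij
        have h1 : ¬ i = j := by
          intro h; rw [h] at hij; exact lt_irrefl _ hij
        have hij' : i < j := hij
        have h2 : ¬ j = 0 := by
          rintro rfl
          exact Fin.not_lt_zero i hij'
        simp [hP, h1, h2]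
      rw [Matrix.det_of_lowerTriangular P htri]
      apply Finset.prod_eq_one
      intro i _
      simp [hP]
    have horth : ∀ j, inner ℝ v ((c' j : ((ℝ ∙ v)ᗮ : Submodule ℝ E)) : E) = (0:ℝ) := by
      intro j
      have hmem := ((c' j : ((ℝ ∙ v)ᗮ : Submodule ℝ E))).2
      exact hmem v (Submodule.mem_span_singleton_self v)
    have hdetu : (gramMat u).det
        = ‖v‖^2 * (gramMat (fun j => ((c' j : ((ℝ ∙ v)ᗮ : Submodule ℝ E)) : E))).det := by
      rw [hu]
      exact det_gramMat_cons v _ horth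
    have hgrameq : gramMat (fun j => ((c' j : ((ℝ ∙ v)ᗮ : Submodule ℝ E)) : E))
        = gramMat (fun j => (c' j : ((ℝ ∙ v)ᗮ : Submodule ℝ E))) := by
      ext i j
      simp [gramMat, Submodule.coe_inner]
    have hdetw : (gramMat (fun i => ((w i : Λ) : E))).det
        = ‖v‖^2 * (gramMat (fun j => (c' j : ((ℝ ∙ v)ᗮ : Submodule ℝ E)))).det := by
      rw [hgram1, Matrix.det_mul, Matrix.det_mul, Matrix.det_transpose, hdetP,
        one_mul, mul_one, hdetu, hgrameq]
    -- step 11 : the inequality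
    have hprodw : ∏ i, ‖(c i : E)‖ = ‖v‖ * ∏ j, ‖((d j : Λ) : E)‖ := by
      simp only [hcw]
      rw [Fin.prod_univ_succ]
      have h0 : ((w 0 : Λ) : E) = v := by simp [hw, hvL]
      have hsucc : ∀ j : Fin n, ((w j.succ : Λ) : E) = ((d j : Λ) : E) := fun j => by simp [hw]
      simp only [h0, hsucc]
    have hdetpos : (0:ℝ) ≤ (gramMat (fun j => (c' j : ((ℝ ∙ v)ᗮ : Submodule ℝ E)))).det := by
      by_contra h
      push_neg at h
      have := hc'
      nlinarith [sq_nonneg (∏ i, ‖(c' i : ((ℝ ∙ v)ᗮ : Submodule ℝ E))‖),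
        pow_pos (by norm_num : (0:ℝ) < 4/3) (n*(n-1)/2)]
    calc (∏ i, ‖(c i : E)‖)^2
        = ‖v‖^2 * ∏ j, ‖((d j : Λ) : E)‖^2 := by
          rw [hprodw, mul_pow, Finset.prod_pow]
      _ ≤ ‖v‖^2 * ∏ j, ((4/3) * ‖((c' j : ((ℝ ∙ v)ᗮ : Submodule ℝ E)) : E)‖^2) := by
          refine mul_le_mul_of_nonneg_left ?_ (sq_nonneg _)
          exact Finset.prod_le_prod (fun j _ => sq_nonneg _) (fun j _ => hbound j)
      _ = (4/3)^n * (‖v‖^2 * (∏ j, ‖(c' j : ((ℝ ∙ v)ᗮ : Submodule ℝ E))‖)^2) := by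
          rw [Finset.prod_mul_distrib, Finset.prod_const, Finset.card_univ, Fintype.card_fin,
            ← Finset.prod_pow]
          have : ∀ j, ‖((c' j : ((ℝ ∙ v)ᗮ : Submodule ℝ E)) : E)‖
              = ‖(c' j : ((ℝ ∙ v)ᗮ : Submodule ℝ E))‖ := fun j => Submodule.norm_coe _
          simp only [this]
          rw [Finset.prod_pow]
          ring
      _ ≤ (4/3)^n * (‖v‖^2 * ((4/3 : ℝ)^(n*(n-1)/2)
            * (gramMat (fun i => (c' i : ((ℝ ∙ v)ᗮ : Submodule ℝ E)))).det)) := by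
          refine mul_le_mul_of_nonneg_left (mul_le_mul_of_nonneg_left hc' (sq_nonneg _)) ?_
          positivity
      _ = (4/3 : ℝ)^((n+1)*((n+1)-1)/2) * (gramMat (fun i => (c i : E))).det := by
          have he : (n+1)*((n+1)-1)/2 = n*(n-1)/2 + n := tri_succ n
          have hgc : gramMat (fun i => (c i : E)) = gramMat (fun i => ((w i : Λ) : E)) := by
            ext i j; simp [gramMat, hcw]
          rw [hgc, hdetw, he, pow_add]
          ring

lemma gamma_ge : ∀ k : ℕ, (Real.pi/4 : ℝ) ^ ((k:ℝ)/2) ≤ Real.Gamma ((k:ℝ)/2 + 1) := by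
  have hπ0 : (0:ℝ) < Real.pi := Real.pi_pos
  have hπ4 : Real.pi ≤ 4 := by linarith [Real.pi_le_four]
  have hb0 : (0:ℝ) < Real.pi/4 := by linarith
  intro k
  induction k using Nat.strong_induction_on with
  | _ k ih =>
    match k with
    | 0 => simp [Real.Gamma_one]
    | 1 =>
      have h1 : ((1:ℕ):ℝ)/2 = (1/2 : ℝ) := by norm_num
      rw [h1, Real.Gamma_add_one (by norm_num), Real.Gamma_one_half_eq]
      rw [← Real.sqrt_eq_rpow]
      have h2 : Real.sqrt (Real.pi/4) = Real.sqrt Real.pi / 2 := by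
        rw [show Real.pi/4 = (Real.sqrt Real.pi / 2)^2 by
          rw [div_pow, Real.sq_sqrt hπ0.le]; norm_num]
        exact Real.sqrt_sq (by positivity)
      rw [h2]
      linarith [Real.sqrt_nonneg Real.pi]
    | (m+2) =>
      have ihm := ih m (by omega)
      have harg : (0:ℝ) < (m:ℝ)/2 + 1 := by positivity
      have hΓpos : (0:ℝ) < Real.Gamma ((m:ℝ)/2 + 1) := Real.Gamma_pos_of_pos harg
      have hstep : Real.Gamma (((m+2:ℕ):ℝ)/2 + 1) = ((m:ℝ)/2 + 1) * Real.Gamma ((m:ℝ)/2 + 1) := by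
        have h3 : ((m+2:ℕ):ℝ)/2 + 1 = ((m:ℝ)/2 + 1) + 1 := by push_cast; ring
        rw [h3, Real.Gamma_add_one (ne_of_gt harg)]
      have hlhs2 : (Real.pi/4 : ℝ) ^ ((((m+2:ℕ)):ℝ)/2)
          = (Real.pi/4 : ℝ) ^ ((m:ℝ)/2) * (Real.pi/4) := by
        rw [show ((((m+2:ℕ)):ℝ)/2) = (m:ℝ)/2 + 1 by push_cast; ring,
          Real.rpow_add hb0, Real.rpow_one]
      rw [hstep, hlhs2]
      have hnn : (0:ℝ) ≤ (Real.pi/4 : ℝ) ^ ((m:ℝ)/2) := Real.rpow_nonneg (le_of_lt hb0) _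
      have hm1 : (1:ℝ) ≤ (m:ℝ)/2 + 1 := by
        have : (0:ℝ) ≤ (m:ℝ) := Nat.cast_nonneg m
        linarith
      calc (Real.pi/4 : ℝ) ^ ((m:ℝ)/2) * (Real.pi/4)
          ≤ (Real.pi/4 : ℝ) ^ ((m:ℝ)/2) * 1 := by
            apply mul_le_mul_of_nonneg_left (by linarith) hnn
        _ = (Real.pi/4 : ℝ) ^ ((m:ℝ)/2) := mul_one _
        _ ≤ Real.Gamma ((m:ℝ)/2 + 1) := ihm
        _ ≤ ((m:ℝ)/2 + 1) * Real.Gamma ((m:ℝ)/2 + 1) :=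
            le_mul_of_one_le_left (le_of_lt hΓpos) hm1
lemma unitBallVol_pos (k : ℕ) : 0 < unitBallVol k := by
  unfold unitBallVol
  have h1 : (0:ℝ) < (k:ℝ)/2 + 1 := by positivity
  exact div_pos (Real.rpow_pos_of_pos Real.pi_pos _) (Real.Gamma_pos_of_pos h1)

lemma unitBallVol_le (k : ℕ) : unitBallVol k ≤ 2^k := by
  unfold unitBallVol
  have h1 : (0:ℝ) < (k:ℝ)/2 + 1 := by positivity
  rw [div_le_iff₀ (Real.Gamma_pos_of_pos h1)]
  have h2 : (Real.pi/4 : ℝ) ^ ((k:ℝ)/2) * (2:ℝ)^k = Real.pi ^ ((k:ℝ)/2) := by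
    rw [Real.div_rpow (le_of_lt Real.pi_pos) (by norm_num)]
    have h3 : ((4:ℝ)) ^ ((k:ℝ)/2) = (2:ℝ)^k := by
      rw [show (4:ℝ) = (2:ℝ)^(2:ℝ) by
          rw [show (2:ℝ) = ((2:ℕ):ℝ) by norm_num, Real.rpow_natCast]; norm_num,
        ← Real.rpow_natCast 2 k, ← Real.rpow_mul (by norm_num)]
      congr 1
      ring
    rw [h3]
    field_simp
  calc Real.pi ^ ((k:ℝ)/2) = (Real.pi/4 : ℝ) ^ ((k:ℝ)/2) * (2:ℝ)^k := h2.symm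
    _ ≤ Real.Gamma ((k:ℝ)/2 + 1) * (2:ℝ)^k := by
        apply mul_le_mul_of_nonneg_right (gamma_ge k) (by positivity)
    _ = (2:ℝ)^k * Real.Gamma ((k:ℝ)/2 + 1) := by ring



theorem reduced_basis_product_bound (k : ℕ) (hk : 0 < k)
    (Λ : Submodule ℤ (EuclideanSpace ℝ (Fin k)))
    (b0 : Basis (Fin k) ℤ Λ)
    (hfull : LinearIndependent ℝ (fun i => (b0 i : EuclideanSpace ℝ (Fin k)))) :
    ∃ b : Basis (Fin k) ℤ Λ,
      (∏ i, ‖(b i : EuclideanSpace ℝ (Fin k))‖)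
        ≤ 2 ^ k * (3 / 2 : ℝ) ^ (k * (k - 1) / 2) *
          |Matrix.det (Matrix.of fun i j : Fin k => (b0 i : EuclideanSpace ℝ (Fin k)) j)|
          / unitBallVol k := by
  classical
  have hfin : finrank ℝ (EuclideanSpace ℝ (Fin k)) = k := finrank_euclideanSpace_fin
  obtain ⟨c, hc⟩ := hermite_aux k (EuclideanSpace ℝ (Fin k)) hfin Λ b0 hfull
  set M0 : Matrix (Fin k) (Fin k) ℝ :=
    Matrix.of (fun i j : Fin k => (b0 i : EuclideanSpace ℝ (Fin k)) j) with hM0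
  set Mc : Matrix (Fin k) (Fin k) ℝ :=
    Matrix.of (fun i j : Fin k => (c i : EuclideanSpace ℝ (Fin k)) j) with hMc
  have hgram : gramMat (fun i => (c i : EuclideanSpace ℝ (Fin k))) = Mc * Mcᵀ := by
    ext i j
    simp only [gramMat, Matrix.of_apply, Matrix.mul_apply, Matrix.transpose_apply, hMc]
    rw [PiLp.inner_apply]
    simp [RCLike.inner_apply, conj_trivial]
    exact Finset.sum_congr rfl fun _ _ => mul_comm _ _
  have hdet1 : (gramMat (fun i => (c i : EuclideanSpace ℝ (Fin k)))).det = (Mc.det)^2 := by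
    rw [hgram, Matrix.det_mul, Matrix.det_transpose]; ring
  set U : Matrix (Fin k) (Fin k) ℤ := b0.toMatrix ⇑c with hU
  have hUdet : ((U.det : ℤ) : ℝ)^2 = 1 := by
    have h1 : U * c.toMatrix ⇑b0 = 1 := b0.toMatrix_mul_toMatrix_flip c
    have h2 : U.det * (c.toMatrix ⇑b0).det = 1 := by rw [← Matrix.det_mul, h1, Matrix.det_one]
    have h3 : IsUnit U.det := IsUnit.of_mul_eq_one _ h2
    rcases Int.isUnit_iff.mp h3 with h | h <;> rw [h] <;> norm_num
  have hMcM0 : Mc = (U.map (Int.cast : ℤ → ℝ))ᵀ * M0 := by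
    ext j l
    have hsum : (c j : EuclideanSpace ℝ (Fin k))
        = ∑ i, ((U i j : ℤ) : ℝ) • (b0 i : EuclideanSpace ℝ (Fin k)) := by
      have h4 : c j = ∑ i, U i j • b0 i := by
        rw [hU]
        simp only [Basis.toMatrix_apply]
        exact (b0.sum_repr (c j)).symm
      have h5 := congrArg (Λ.subtype) h4
      simp only [map_sum, map_zsmul, Submodule.coe_subtype] at h5
      rw [h5]
      refine Finset.sum_congr rfl fun i _ => ?_
      rw [Int.cast_smul_eq_zsmul]
    calc Mc j l = (c j : EuclideanSpace ℝ (Fin k)) l := rfl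
      _ = (∑ i, ((U i j : ℤ) : ℝ) • (b0 i : EuclideanSpace ℝ (Fin k))) l := by rw [hsum]
      _ = ∑ i, ((U i j : ℤ) : ℝ) * (b0 i : EuclideanSpace ℝ (Fin k)) l := by
          simp
      _ = ((U.map (Int.cast : ℤ → ℝ))ᵀ * M0) j l := by
          simp [Matrix.mul_apply, Matrix.transpose_apply, Matrix.map_apply, hM0]
  have hdet2 : (Mc.det)^2 = (M0.det)^2 := by
    rw [hMcM0, Matrix.det_mul, Matrix.det_transpose]
    have h6 : (U.map (Int.cast : ℤ → ℝ)).det = ((U.det : ℤ) : ℝ) := by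
      rw [show U.map (Int.cast : ℤ → ℝ) = (Int.castRingHom ℝ).mapMatrix U from rfl,
        ← RingHom.map_det]
      rfl
    rw [h6, mul_pow, hUdet, one_mul]
  set P := ∏ i, ‖(c i : EuclideanSpace ℝ (Fin k))‖ with hPdef
  have hP0 : 0 ≤ P := Finset.prod_nonneg fun i _ => norm_nonneg _
  set Kk := k*(k-1)/2 with hKdef
  have hc2 : P^2 ≤ (4/3 : ℝ)^Kk * (M0.det)^2 := by
    rw [hdet1, hdet2] at hc
    exact hc
  have h11 : (4/3:ℝ)^Kk ≤ ((3/2:ℝ)^Kk)^2 := by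
    calc (4/3:ℝ)^Kk ≤ (9/4:ℝ)^Kk := pow_le_pow_left₀ (by norm_num) (by norm_num) Kk
      _ = ((3/2:ℝ)^Kk)^2 := by rw [← pow_mul, mul_comm, pow_mul]; norm_num
  have h10 : P^2 ≤ ((3/2 : ℝ)^Kk * |M0.det|)^2 := by
    calc P^2 ≤ (4/3 : ℝ)^Kk * (M0.det)^2 := hc2
      _ ≤ ((3/2:ℝ)^Kk)^2 * (M0.det)^2 := mul_le_mul_of_nonneg_right h11 (sq_nonneg _)
      _ = ((3/2 : ℝ)^Kk * |M0.det|)^2 := by rw [mul_pow, sq_abs]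
  have h9 : P ≤ (3/2 : ℝ)^Kk * |M0.det| := by
    have h12 := Real.sqrt_le_sqrt h10
    rwa [Real.sqrt_sq hP0, Real.sqrt_sq (by positivity)] at h12
  have hω : 0 < unitBallVol k := unitBallVol_pos k
  have hω2 : unitBallVol k ≤ 2^k := unitBallVol_le k
  refine ⟨c, ?_⟩
  calc P ≤ (3/2:ℝ)^Kk * |M0.det| := h9
    _ = 2^k * (3/2:ℝ)^Kk * |M0.det| / 2^k := by
        field_simp
    _ ≤ 2^k * (3/2:ℝ)^Kk * |M0.det| / unitBallVol k := by
        apply div_le_div_of_nonneg_left (by positivity) hω hω2
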